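/- (Theorem 1, part i: disturbance-free convergence.) Let 0 < μ ≤ Λ and 0 < r < 2μ/Λ². Let H₂ : ℕ → ℝ^{q×q} be a sequence of symmetric positive-definite matrices with λ_min(H₂(k)) ≥ μ and λ_max(H₂(k)) ≤ Λ for all k, and let the parameter error Φ̃ : ℕ → ℝ^{n×q} obey the disturbance-free concurrent-learning error dynamics Φ̃(k+1) = Φ̃(k)·(I_q − r·H₂(k)). Then ‖Φ̃(k)‖_F → 0 as k → ∞; consequently, for any regressor sequence ζ̄ : ℕ → ℝ^q with ‖ζ̄(k)‖ ≤ 1 for all k, the identification error e_si(k) = Φ̃(k)ζ̄(k) converges to zero. -/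

import Mathlib

open scoped Matrix

attribute [local instance] Matrix.frobeniusNormedAddCommGroup

private lemma real_conjTranspose_eq {m p : Type*} (A : Matrix m p ℝ) : Aᴴ = Aᵀ := by
  ext i j
  simp [Matrix.conjTranspose_apply]

/-- Spectral decomposition sums for a real symmetric matrix. -/
private lemma spectral_sums {q : ℕ} {A : Matrix (Fin q) (Fin q) ℝ} (hA : A.IsHermitian)
    (x : Fin q → ℝ) :
    ∃ y : Fin q → ℝ,
      dotProduct x x = ∑ i, y i ^ 2 ∧
      dotProduct x (A *ᵥ x) = ∑ i, hA.eigenvalues i * y i ^ 2 ∧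
      dotProduct (A *ᵥ x) (A *ᵥ x) = ∑ i, hA.eigenvalues i ^ 2 * y i ^ 2 := by
  classical
  set U : Matrix (Fin q) (Fin q) ℝ := (hA.eigenvectorUnitary : Matrix (Fin q) (Fin q) ℝ) with hU
  have hUU : U * star U = 1 := (Matrix.mem_unitaryGroup_iff).mp (hA.eigenvectorUnitary).2
  have hUU' : star U * U = 1 := (Matrix.mem_unitaryGroup_iff').mp (hA.eigenvectorUnitary).2
  have hstar : star U = Uᵀ := by
    rw [Matrix.star_eq_conjTranspose, real_conjTranspose_eq]
  have hspec : A = U * Matrix.diagonal hA.eigenvalues * Uᵀ := by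
    have h := hA.spectral_theorem
    rw [Unitary.conjStarAlgAut_apply, ← hU] at h
    rw [hstar] at h
    have hdiag : Matrix.diagonal (RCLike.ofReal ∘ hA.eigenvalues : Fin q → ℝ)
        = Matrix.diagonal hA.eigenvalues := by
      congr 1
    rw [hdiag] at h
    exact h
  rw [hstar] at hUU hUU'
  set y : Fin q → ℝ := Uᵀ *ᵥ x with hy
  have hyv : y = x ᵥ* U := by rw [hy, Matrix.mulVec_transpose]
  -- orthogonality: (U *ᵥ z) ⬝ᵥ (U *ᵥ z) = z ⬝ᵥ z
  have horth : ∀ z : Fin q → ℝ, dotProduct (U *ᵥ z) (U *ᵥ z) = dotProduct z z := by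
    intro z
    rw [Matrix.dotProduct_mulVec, ← Matrix.mulVec_transpose, Matrix.mulVec_mulVec, hUU', Matrix.one_mulVec]
  have hAx : A *ᵥ x = U *ᵥ (Matrix.diagonal hA.eigenvalues *ᵥ y) := by
    conv_lhs => rw [hspec]
    rw [← Matrix.mulVec_mulVec, ← Matrix.mulVec_mulVec]
  have hxUy : x = U *ᵥ y := by
    rw [hy, Matrix.mulVec_mulVec, hUU, Matrix.one_mulVec]
  refine ⟨y, ?_, ?_, ?_⟩
  · calc dotProduct x x = dotProduct (U *ᵥ y) (U *ᵥ y) := by rw [← hxUy]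
      _ = dotProduct y y := horth y
      _ = ∑ i, y i ^ 2 := by simp [dotProduct, sq]
  · rw [hAx, Matrix.dotProduct_mulVec, ← hyv]
    simp only [dotProduct, Matrix.mulVec_diagonal]
    exact Finset.sum_congr rfl fun i _ => by ring
  · rw [hAx, horth]
    simp only [dotProduct, Matrix.mulVec_diagonal]
    exact Finset.sum_congr rfl fun i _ => by ring

private lemma frob_norm_eq {n q : ℕ} (A : Matrix (Fin n) (Fin q) ℝ) :
    ‖A‖ = Real.sqrt (∑ i, dotProduct (A i) (A i)) := by
  rw [Matrix.frobenius_norm_def, Real.sqrt_eq_rpow]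
  congr 1
  refine Finset.sum_congr rfl fun i _ => ?_
  simp [dotProduct, Real.rpow_two, sq, Real.norm_eq_abs, abs_mul_abs_self]

theorem concurrent_learning_convergence_disturbance_free
    {n q : ℕ} (μ Λ r : ℝ) (hμ : 0 < μ) (hμΛ : μ ≤ Λ)
    (hr0 : 0 < r) (hr : r < 2 * μ / Λ ^ 2)
    (H₂ : ℕ → Matrix (Fin q) (Fin q) ℝ)
    (hherm : ∀ k, (H₂ k).IsHermitian) (hpos : ∀ k, (H₂ k).PosDef)
    (heig : ∀ k i, μ ≤ (hherm k).eigenvalues i ∧ (hherm k).eigenvalues i ≤ Λ)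
    (Φtilde : ℕ → Matrix (Fin n) (Fin q) ℝ)
    (hdyn : ∀ k, Φtilde (k + 1) = Φtilde k * (1 - r • H₂ k)) :
    Filter.Tendsto (fun k => ‖Φtilde k‖) Filter.atTop (nhds 0) ∧
    ∀ ζ : ℕ → EuclideanSpace ℝ (Fin q), (∀ k, ‖ζ k‖ ≤ 1) →
      Filter.Tendsto (fun k => (Φtilde k) *ᵥ (ζ k)) Filter.atTop (nhds 0) := by
  have hΛ0 : 0 < Λ := lt_of_lt_of_le hμ hμΛ
  set c2 : ℝ := 1 - 2 * r * μ + r ^ 2 * Λ ^ 2 with hc2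
  have hrΛ : r * Λ ^ 2 < 2 * μ := (lt_div_iff₀ (pow_pos hΛ0 2)).mp hr
  have hc2lt : c2 < 1 := by nlinarith
  have hc2nonneg : 0 ≤ c2 := by nlinarith [sq_nonneg (1 - r * Λ)]
  set c : ℝ := Real.sqrt c2 with hc
  have hc0 : 0 ≤ c := Real.sqrt_nonneg _
  have hcsq : c ^ 2 = c2 := Real.sq_sqrt hc2nonneg
  have hc1 : c < 1 := by
    rw [hc]
    have := Real.sqrt_lt_sqrt hc2nonneg hc2lt
    simpa using this
  -- key step inequality
  have hstep : ∀ k, ‖Φtilde (k + 1)‖ ≤ c * ‖Φtilde k‖ := by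
    intro k
    -- row-wise bound
    have hrow : ∀ x : Fin q → ℝ,
        dotProduct (x ᵥ* (1 - r • H₂ k)) (x ᵥ* (1 - r • H₂ k))
          ≤ c2 * dotProduct x x := by
      intro x
      have hsymmT : (H₂ k)ᵀ = H₂ k := by
        rw [← real_conjTranspose_eq]; exact (hherm k)
      have hMv : x ᵥ* (1 - r • H₂ k) = x - r • ((H₂ k) *ᵥ x) := by
        rw [← Matrix.mulVec_transpose]
        have : (1 - r • H₂ k)ᵀ = 1 - r • H₂ k := by
          rw [Matrix.transpose_sub, Matrix.transpose_one, Matrix.transpose_smul, hsymmT]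
        rw [this, Matrix.sub_mulVec, Matrix.one_mulVec, Matrix.smul_mulVec]
      obtain ⟨y, h1, h2, h3⟩ := spectral_sums (hherm k) x
      have hexp : dotProduct (x - r • ((H₂ k) *ᵥ x)) (x - r • ((H₂ k) *ᵥ x))
          = dotProduct x x - 2 * r * dotProduct x ((H₂ k) *ᵥ x)
            + r ^ 2 * dotProduct ((H₂ k) *ᵥ x) ((H₂ k) *ᵥ x) := by
        simp only [sub_dotProduct, dotProduct_sub, smul_dotProduct,
          dotProduct_smul, smul_eq_mul]
        rw [dotProduct_comm ((H₂ k) *ᵥ x) x]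
        ring
      rw [hMv, hexp, h1, h2, h3, Finset.mul_sum, Finset.mul_sum, Finset.mul_sum,
        ← Finset.sum_sub_distrib, ← Finset.sum_add_distrib]
      refine Finset.sum_le_sum fun i _ => ?_
      rw [hc2]
      obtain ⟨hl, hu⟩ := heig k i
      have hy2 : (0:ℝ) ≤ y i ^ 2 := sq_nonneg _
      have hl0 : (0:ℝ) ≤ (hherm k).eigenvalues i := le_trans hμ.le hl
      have hsq : (hherm k).eigenvalues i ^ 2 ≤ Λ ^ 2 := by nlinarith
      nlinarith [mul_le_mul_of_nonneg_right hl hy2, mul_le_mul_of_nonneg_right hsq hy2,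
        sq_nonneg r, mul_le_mul_of_nonneg_left (mul_le_mul_of_nonneg_right hl hy2) hr0.le]
    -- assemble Frobenius bound
    have hrowprod : ∀ i, (Φtilde (k+1)) i = (Φtilde k) i ᵥ* (1 - r • H₂ k) := by
      intro i; funext j
      rw [hdyn k]
      simp [Matrix.mul_apply, Matrix.vecMul, dotProduct]
    have hS : (∑ i, dotProduct ((Φtilde (k+1)) i) ((Φtilde (k+1)) i))
        ≤ c2 * ∑ i, dotProduct ((Φtilde k) i) ((Φtilde k) i) := by
      rw [Finset.mul_sum]
      refine Finset.sum_le_sum fun i _ => ?_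
      rw [hrowprod i]
      exact hrow _
    rw [frob_norm_eq, frob_norm_eq]
    calc Real.sqrt (∑ i, dotProduct ((Φtilde (k+1)) i) ((Φtilde (k+1)) i))
        ≤ Real.sqrt (c2 * ∑ i, dotProduct ((Φtilde k) i) ((Φtilde k) i)) :=
          Real.sqrt_le_sqrt hS
      _ = c * Real.sqrt (∑ i, dotProduct ((Φtilde k) i) ((Φtilde k) i)) := by
          rw [Real.sqrt_mul hc2nonneg]
  -- geometric bound
  have hgeo : ∀ k, ‖Φtilde k‖ ≤ c ^ k * ‖Φtilde 0‖ := by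
    intro k
    induction k with
    | zero => simp
    | succ k ih =>
      calc ‖Φtilde (k+1)‖ ≤ c * ‖Φtilde k‖ := hstep k
        _ ≤ c * (c ^ k * ‖Φtilde 0‖) := by
            exact mul_le_mul_of_nonneg_left ih hc0
        _ = c ^ (k+1) * ‖Φtilde 0‖ := by ring
  have htendsto : Filter.Tendsto (fun k => ‖Φtilde k‖) Filter.atTop (nhds 0) := by
    have hgeom : Filter.Tendsto (fun k => c ^ k * ‖Φtilde 0‖) Filter.atTop (nhds 0) := by
      have := tendsto_pow_atTop_nhds_zero_of_lt_one hc0 hc1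
      simpa using this.mul_const ‖Φtilde 0‖
    refine squeeze_zero (fun k => norm_nonneg _) hgeo hgeom
  refine ⟨htendsto, ?_⟩
  intro ζ hζ
  rw [tendsto_pi_nhds]
  intro i
  simp only [Pi.zero_apply]
  have hbound : ∀ k, |((Φtilde k) *ᵥ (ζ k)) i| ≤ (q : ℝ) * ‖Φtilde k‖ := by
    intro k
    have hentry : ∀ (A : Matrix (Fin n) (Fin q) ℝ) a b, |A a b| ≤ ‖A‖ := by
      intro A a b
      rw [frob_norm_eq, ← Real.sqrt_sq_eq_abs]
      apply Real.sqrt_le_sqrt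
      calc A a b ^ 2 ≤ dotProduct (A a) (A a) := by
            have : dotProduct (A a) (A a) = ∑ j, (A a j) ^ 2 := by
              simp [dotProduct, sq]
            rw [this]
            exact Finset.single_le_sum (f := fun j => A a j ^ 2)
              (fun j _ => sq_nonneg _) (Finset.mem_univ b)
        _ ≤ ∑ i', dotProduct (A i') (A i') := by
            refine Finset.single_le_sum (f := fun i' => dotProduct (A i') (A i'))
              (fun i' _ => ?_) (Finset.mem_univ a)
            exact Finset.sum_nonneg fun j _ => mul_self_nonneg _
    have hζj : ∀ j, |ζ k j| ≤ 1 := by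
      intro j
      have h1 : |ζ k j| ≤ ‖ζ k‖ := by
        rw [EuclideanSpace.norm_eq, ← Real.sqrt_sq_eq_abs]
        apply Real.sqrt_le_sqrt
        have : ‖ζ k j‖ ^ 2 = ζ k j ^ 2 := by rw [Real.norm_eq_abs, sq_abs]
        rw [← this]
        exact Finset.single_le_sum (f := fun j => ‖ζ k j‖ ^ 2)
          (fun j _ => sq_nonneg _) (Finset.mem_univ j)
      exact h1.trans (hζ k)
    calc |((Φtilde k) *ᵥ (ζ k)) i| = |∑ j, (Φtilde k) i j * ζ k j| := by
          simp [Matrix.mulVec, dotProduct]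
      _ ≤ ∑ j, |(Φtilde k) i j * ζ k j| := Finset.abs_sum_le_sum_abs _ _
      _ ≤ ∑ j, ‖Φtilde k‖ * 1 := by
          refine Finset.sum_le_sum fun j _ => ?_
          rw [abs_mul]
          exact mul_le_mul (hentry _ i j) (hζj j) (abs_nonneg _) (norm_nonneg _)
      _ = (q : ℝ) * ‖Φtilde k‖ := by simp [mul_comm]
  have hq : Filter.Tendsto (fun k => (q : ℝ) * ‖Φtilde k‖) Filter.atTop (nhds 0) := by
    simpa using htendsto.const_mul (q : ℝ)
  refine squeeze_zero_norm (fun k => ?_) hq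
  simpa [Real.norm_eq_abs] using hbound k
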